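/- Let k ≥ 1 and 0 ≤ q ≤ k be integers. There exist finitely many complex-linear subspaces E₁, …, E_N of ℂ^k, each of complex dimension k − q, and a real number θ₀ > 0, such that for every complex-linear subspace F of ℂ^k of complex dimension q there is an index i with ‖P_{E_i}(v)‖ ≤ (1 − θ₀)‖v‖ for every v ∈ F, where P_{E_i} denotes the orthogonal projection of ℂ^k onto E_i with respect to the standard Hermitian inner product. -/

import Mathlib

open scoped InnerProductSpace in
lemma stmt_14_aux {E : Type*} [NormedAddCommGroup E] [InnerProductSpace ℂ E]
    [FiniteDimensional ℂ E] (k q : ℕ) (hk : 1 ≤ k) (hq : q ≤ k)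
    (hdim : Module.finrank ℂ E = k) :
    ∃ (N : ℕ) (Ef : Fin N → Submodule ℂ E) (θ₀ : ℝ),
      0 < θ₀ ∧ (∀ i, Module.finrank ℂ (Ef i) = k - q) ∧
      ∀ F : Submodule ℂ E, Module.finrank ℂ F = q →
        ∃ i, ∀ v ∈ F, ‖((Ef i).orthogonalProjectionOnto v : E)‖ ≤ (1 - θ₀) * ‖v‖ := by
  classical
  set ε : ℝ := 1 / (2 * (q + 1)) with hεdef
  have hε : 0 < ε := by positivity
  -- the compact set of orthonormal q-frames
  set K : Set (Fin q → E) := {f | Orthonormal ℂ f} with hKdef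
  have hKclosed : IsClosed K := by
    have hKeq : K = ⋂ (i : Fin q) (j : Fin q),
        {f : Fin q → E | ⟪f i, f j⟫_ℂ = (if i = j then (1 : ℂ) else 0)} := by
      ext f
      simp only [hKdef, Set.mem_setOf_eq, Set.mem_iInter, orthonormal_iff_ite]
    rw [hKeq]
    refine isClosed_iInter fun i => isClosed_iInter fun j => isClosed_eq ?_ continuous_const
    exact Continuous.inner ((continuous_apply i)) ((continuous_apply j))
  have hKbdd : Bornology.IsBounded K := by
    refine (Metric.isBounded_closedBall (x := (0 : Fin q → E)) (r := 1)).subset ?_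
    intro f hf
    rw [Metric.mem_closedBall, dist_zero_right]
    refine pi_norm_le_iff_of_nonneg zero_le_one |>.2 fun i => ?_
    exact le_of_eq (hf.1 i)
  have hKcompact : IsCompact K := Metric.isCompact_of_isClosed_isBounded hKclosed hKbdd
  obtain ⟨t, hts, htf, htcover⟩ := hKcompact.finite_cover_balls hε
  refine ⟨htf.toFinset.card, fun i =>
      (Submodule.span ℂ (Set.range ((htf.toFinset.equivFin.symm i : Fin q → E))))ᗮ,
      1/2, by norm_num, ?_, ?_⟩
  · -- dimensions
    intro i
    beta_reduce
    set g : Fin q → E := (htf.toFinset.equivFin.symm i : Fin q → E) with hgdef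
    have hgK : Orthonormal ℂ g := hts ((htf.mem_toFinset).1 (htf.toFinset.equivFin.symm i).2)
    have hspan : Module.finrank ℂ (Submodule.span ℂ (Set.range g)) = q := by
      rw [finrank_span_eq_card hgK.linearIndependent, Fintype.card_fin]
    refine Submodule.finrank_add_finrank_orthogonal' ?_
    rw [hspan, hdim]
    omega
  · -- main estimate
    intro F hF
    have b : OrthonormalBasis (Fin q) ℂ F :=
      (stdOrthonormalBasis ℂ F).reindex (finCongr hF)
    set f' : Fin q → E := fun i => (b i : E) with hf'def
    have horth : Orthonormal ℂ f' := b.orthonormal.comp_linearIsometry F.subtypeₗᵢ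
    have hf'K : f' ∈ K := horth
    obtain ⟨g, hgt, hgball⟩ := Set.mem_iUnion₂.1 (htcover hf'K)
    refine ⟨htf.toFinset.equivFin ⟨g, htf.mem_toFinset.2 hgt⟩, fun v hv => ?_⟩
    set G : Submodule ℂ E := Submodule.span ℂ (Set.range g) with hGdef
    have heq : (htf.toFinset.equivFin.symm (htf.toFinset.equivFin
        ⟨g, htf.mem_toFinset.2 hgt⟩) : Fin q → E) = g := by
      rw [Equiv.symm_apply_apply]
    have hsub : (Submodule.span ℂ (Set.range ((htf.toFinset.equivFin.symm (htf.toFinset.equivFin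
        ⟨g, htf.mem_toFinset.2 hgt⟩)) : Fin q → E)))ᗮ = Gᗮ := by rw [heq]
    beta_reduce
    have hcongr : ∀ (K₁ K₂ : Submodule ℂ E) [K₁.HasOrthogonalProjection]
        [K₂.HasOrthogonalProjection], K₁ = K₂ →
        (K₁.orthogonalProjectionOnto v : E) = K₂.orthogonalProjectionOnto v := by
      intro K₁ K₂ _ _ h; subst h; rfl
    rw [hcongr _ _ hsub]
    have hvsum : v = ∑ i, (⟪f' i, v⟫_ℂ • f' i) := by
      calc v = ((⟨v, hv⟩ : F) : E) := rfl
        _ = ((∑ i, (⟪b i, (⟨v, hv⟩ : F)⟫_ℂ • b i) : F) : E) := by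
            rw [b.sum_repr' ⟨v, hv⟩]
        _ = ∑ i, (⟪b i, (⟨v, hv⟩ : F)⟫_ℂ • (b i : E)) := by
            push_cast
            rfl
        _ = ∑ i, (⟪f' i, v⟫_ℂ • f' i) := by
            refine Finset.sum_congr rfl fun i _ => ?_
            rw [Submodule.coe_inner]
    have hcbound : ∀ i, ‖⟪f' i, v⟫_ℂ‖ ≤ ‖v‖ := by
      intro i
      have h1 : ‖⟪f' i, v⟫_ℂ‖ ≤ ‖f' i‖ * ‖v‖ := norm_inner_le_norm _ _
      rw [horth.1 i, one_mul] at h1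
      exact h1
    have hdiff : ∀ i, ‖f' i - g i‖ ≤ ε := by
      intro i
      have h1 : dist (f' i) (g i) ≤ dist f' g := dist_le_pi_dist f' g i
      have h2 : dist f' g < ε := Metric.mem_ball.1 hgball
      rw [dist_eq_norm] at h1
      linarith
    have huG : (∑ i, (⟪f' i, v⟫_ℂ • g i)) ∈ G := Submodule.sum_mem _ fun i _ =>
      Submodule.smul_mem _ _ (Submodule.subset_span ⟨i, rfl⟩)
    have hproj : ‖(Gᗮ.orthogonalProjectionOnto v : E)‖ ≤ ‖v - ∑ i, (⟪f' i, v⟫_ℂ • g i)‖ := by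
      rw [Submodule.coe_orthogonalProjectionOnto_apply, Submodule.starProjection_orthogonal_val]
      rw [Submodule.starProjection_minimal]
      refine ciInf_le ⟨0, ?_⟩ (⟨_, huG⟩ : G)
      rintro x ⟨y, rfl⟩
      exact norm_nonneg _
    have hvu : ‖v - ∑ i, (⟪f' i, v⟫_ℂ • g i)‖ ≤ q * (‖v‖ * ε) := by
      calc ‖v - ∑ i, (⟪f' i, v⟫_ℂ • g i)‖
          = ‖∑ i, (⟪f' i, v⟫_ℂ • (f' i - g i))‖ := by
            have hvec : ∑ i, (⟪f' i, v⟫_ℂ • (f' i - g i))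
                = v - ∑ i, (⟪f' i, v⟫_ℂ • g i) := by
              simp only [smul_sub, Finset.sum_sub_distrib, ← hvsum]
            rw [hvec]
        _ ≤ ∑ i, ‖⟪f' i, v⟫_ℂ • (f' i - g i)‖ := norm_sum_le _ _
        _ ≤ ∑ _i : Fin q, ‖v‖ * ε := by
            refine Finset.sum_le_sum fun i _ => ?_
            rw [norm_smul]
            exact mul_le_mul (hcbound i) (hdiff i) (norm_nonneg _) (norm_nonneg _)
        _ = q * (‖v‖ * ε) := by
            rw [Finset.sum_const, Finset.card_univ, Fintype.card_fin, nsmul_eq_mul]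
    have hfinal : (q : ℝ) * (‖v‖ * ε) ≤ (1 - 1/2) * ‖v‖ := by
      rw [hεdef]
      have h2 : (q : ℝ) * (‖v‖ * (1 / (2 * (q + 1)))) = (q / (2 * (q + 1))) * ‖v‖ := by ring
      rw [h2]
      have h1 : (q : ℝ) / (2 * (q + 1)) ≤ 1/2 := by
        rw [div_le_div_iff₀ (by positivity) (by norm_num)]
        nlinarith [Nat.cast_nonneg (α := ℝ) q]
      have h3 := norm_nonneg v
      nlinarith
    exact hproj.trans (hvu.trans hfinal)

/-- **A finite family of quantitatively transversal projections.** For `0 ≤ q ≤ k` there are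
finitely many `(k−q)`-dimensional complex subspaces `E₁, …, E_N` of `ℂ^k` and `θ₀ > 0` such that
every `q`-dimensional complex subspace `F` satisfies `‖P_{E_i} v‖ ≤ (1 − θ₀)‖v‖` for all `v ∈ F`,
for at least one index `i` (i.e. `F` makes an angle at least `θ₀` with some `E_i`). -/
theorem stmt_14 (k q : ℕ) (hk : 1 ≤ k) (hq : q ≤ k) :
    ∃ (N : ℕ) (E : Fin N → Submodule ℂ (EuclideanSpace ℂ (Fin k))) (θ₀ : ℝ),
      0 < θ₀ ∧ (∀ i, Module.finrank ℂ (E i) = k - q) ∧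
      ∀ F : Submodule ℂ (EuclideanSpace ℂ (Fin k)), Module.finrank ℂ F = q →
        ∃ i, ∀ v ∈ F,
          ‖((E i).orthogonalProjectionOnto v : EuclideanSpace ℂ (Fin k))‖ ≤ (1 - θ₀) * ‖v‖ :=
  stmt_14_aux k q hk hq finrank_euclideanSpace_fin
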